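/- For an integer n > 1, the clique number of the unitary Cayley graph G_{ℤ/nℤ} equals the smallest prime factor p of n, and the chromatic number of G_{ℤ/nℤ} also equals p. -/

import Mathlib

/-- The unitary Cayley graph of a commutative ring: `a` is adjacent to `b`
iff `a ≠ b` and `a - b` is a unit. -/
def unitaryCayley (X : Type*) [CommRing X] : SimpleGraph X where
  Adj a b := a ≠ b ∧ IsUnit (a - b)
  symm := by
    constructor
    rintro a b ⟨h1, h2⟩
    exact ⟨h1.symm, neg_sub a b ▸ h2.neg⟩
  loopless := by constructor; rintro a ⟨h, _⟩; exact h rfl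

lemma coprime_of_lt_minFac {k n : ℕ} (hk : k ≠ 0) (h : k < n.minFac) : Nat.Coprime k n := by
  by_contra hc
  obtain ⟨q, hq, hqd⟩ := Nat.exists_prime_and_dvd (n := Nat.gcd k n) hc
  have h1 : n.minFac ≤ q := Nat.minFac_le_of_dvd hq.two_le (hqd.trans (Nat.gcd_dvd_right k n))
  have h2 : q ≤ k := Nat.le_of_dvd (Nat.pos_of_ne_zero hk) (hqd.trans (Nat.gcd_dvd_left k n))
  omega

lemma clique_aux (n : ℕ) (hn : 1 < n) :
    (unitaryCayley (ZMod n)).IsNClique n.minFac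
      ((Finset.range n.minFac).image (Nat.cast : ℕ → ZMod n)) := by
  have : NeZero n := ⟨by omega⟩
  have hpn : n.minFac ≤ n := Nat.minFac_le (by omega)
  have hinj : ∀ a ∈ Finset.range n.minFac, ∀ b ∈ Finset.range n.minFac,
      (a : ZMod n) = b → a = b := by
    intro a ha b hb hab
    simp only [Finset.mem_range] at ha hb
    have := congrArg ZMod.val hab
    rwa [ZMod.val_cast_of_lt (by omega), ZMod.val_cast_of_lt (by omega)] at this
  constructor
  · intro x hx y hy hxy
    simp only [Finset.coe_image, Finset.coe_range, Set.mem_image, Set.mem_Iio] at hx hy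
    obtain ⟨a, ha, rfl⟩ := hx
    obtain ⟨b, hb, rfl⟩ := hy
    refine ⟨hxy, ?_⟩
    rcases lt_trichotomy a b with h | h | h
    · have : ((b : ZMod n) - a) = ((b - a : ℕ) : ZMod n) := by
        push_cast [Nat.cast_sub h.le]; ring
      have hu : IsUnit ((b - a : ℕ) : ZMod n) :=
        (ZMod.isUnit_iff_coprime _ n).mpr
          (coprime_of_lt_minFac (Nat.sub_ne_zero_of_lt h) (lt_of_le_of_lt (Nat.sub_le b a) hb))
      rw [show (a : ZMod n) - b = -(((b : ZMod n)) - a) by ring, this]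
      exact (hu.neg)
    · exact (hxy (by rw [h])).elim
    · have : ((a : ZMod n) - b) = ((a - b : ℕ) : ZMod n) := by
        push_cast [Nat.cast_sub h.le]; ring
      rw [this]
      exact (ZMod.isUnit_iff_coprime _ n).mpr
        (coprime_of_lt_minFac (Nat.sub_ne_zero_of_lt h) (lt_of_le_of_lt (Nat.sub_le a b) ha))
  · rw [Finset.card_image_of_injOn hinj, Finset.card_range]

theorem unitaryCayley_cliqueNum_chromaticNumber (n : ℕ) (hn : 1 < n) :
    (unitaryCayley (ZMod n)).cliqueNum = n.minFac ∧
      (unitaryCayley (ZMod n)).chromaticNumber = (n.minFac : ℕ∞) := by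
  have : NeZero n := ⟨by omega⟩
  have hpp : n.minFac.Prime := Nat.minFac_prime (by omega)
  have : Fact n.minFac.Prime := ⟨hpp⟩
  set p := n.minFac with hp
  -- coloring with ZMod p
  have hcol : (unitaryCayley (ZMod n)).Colorable p := by
    refine (SimpleGraph.Coloring.mk (fun x => ZMod.castHom (Nat.minFac_dvd n) (ZMod p) x)
      ?_).colorable.mono (by simp [ZMod.card])
    rintro a b ⟨hne, hu⟩ heq
    have heq' : ZMod.castHom (Nat.minFac_dvd n) (ZMod p) a =
        ZMod.castHom (Nat.minFac_dvd n) (ZMod p) b := heq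
    have : IsUnit (ZMod.castHom (Nat.minFac_dvd n) (ZMod p) (a - b)) := hu.map _
    rw [map_sub, heq', sub_self] at this
    exact this.ne_zero rfl
  have hclique := clique_aux n hn
  have hchrom_le : (unitaryCayley (ZMod n)).chromaticNumber ≤ (p : ℕ∞) :=
    hcol.chromaticNumber_le
  have hchrom_ge : (p : ℕ∞) ≤ (unitaryCayley (ZMod n)).chromaticNumber := by
    have := hclique.isClique.card_le_chromaticNumber
    rwa [hclique.card_eq] at this
  have hchrom : (unitaryCayley (ZMod n)).chromaticNumber = (p : ℕ∞) :=
    le_antisymm hchrom_le hchrom_ge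
  refine ⟨le_antisymm ?_ ?_, hchrom⟩
  · obtain ⟨s, hs⟩ := (unitaryCayley (ZMod n)).exists_isNClique_cliqueNum
    have := hs.isClique.card_le_chromaticNumber
    rw [hs.card_eq, hchrom] at this
    exact_mod_cast this
  · have := hclique.isClique.card_le_cliqueNum
    rwa [hclique.card_eq] at this
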